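/- Let T > 0. Let θ : (0,T] → ℝ be a C¹ function, c : (0,T] → ℝ a continuous function, and m : (0,T] → ℝ a bounded function, such that θ'(t) = m(t) + sin(θ(t))·c(t) for every t ∈ (0,T]. Define δ(t) = ∫₀ᵗ cos(θ(s)) ds and M(t) = sup_{0 < s ≤ t} |m(s)|. Assume that δ(t) > 0 and δ(t)·c(t) < −3 for every t ∈ (0,T]. Then for every t ∈ (0,T] one has |sin(θ(t))| ≤ t·M(t)/3. -/

import Mathlib

open Set Filter Topology

namespace Stmt7Aux
open MeasureTheory intervalIntegral

lemma cos_int {t₁ : ℝ} {θ : ℝ → ℝ} (hθ : ∀ t ∈ Ioc (0:ℝ) t₁, ContinuousAt θ t) :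
    ∀ x ∈ Icc (0:ℝ) t₁, IntervalIntegrable (fun s => Real.cos (θ s)) volume 0 x := by
  intro x hx
  rw [intervalIntegrable_iff, uIoc_of_le hx.1]
  refine ⟨ContinuousOn.aestronglyMeasurable (fun t ht => ?_) measurableSet_Ioc,
    HasFiniteIntegral.restrict_of_bounded (C := 1) measure_Ioc_lt_top (ae_of_all _ fun s => ?_)⟩
  · exact (Real.continuous_cos.continuousAt.comp (hθ t ⟨ht.1, ht.2.trans hx.2⟩)).continuousWithinAt
  · rw [Real.norm_eq_abs]; exact Real.abs_cos_le_one _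

lemma dl_sub {t₁ : ℝ} {θ : ℝ → ℝ} (hθ : ∀ t ∈ Ioc (0:ℝ) t₁, ContinuousAt θ t) :
    ∀ x ∈ Icc (0:ℝ) t₁, ∀ y ∈ Icc (0:ℝ) t₁, x ≤ y →
      |(∫ s in (0:ℝ)..y, Real.cos (θ s)) - ∫ s in (0:ℝ)..x, Real.cos (θ s)| ≤ y - x := by
  intro x hx y hy hxy
  rw [integral_interval_sub_left (cos_int hθ y hy) (cos_int hθ x hx)]
  have := intervalIntegral.norm_integral_le_of_norm_le_const
    (a := x) (b := y) (C := 1) (f := fun s => Real.cos (θ s))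
    (fun s _ => by rw [Real.norm_eq_abs]; exact Real.abs_cos_le_one _)
  rw [Real.norm_eq_abs] at this
  calc |∫ s in x..y, Real.cos (θ s)| ≤ 1 * |y - x| := this
    _ = y - x := by rw [one_mul, abs_of_nonneg (by linarith)]

lemma dl_le {t₁ : ℝ} {θ : ℝ → ℝ} (hθ : ∀ t ∈ Ioc (0:ℝ) t₁, ContinuousAt θ t) :
    ∀ x ∈ Icc (0:ℝ) t₁, (∫ s in (0:ℝ)..x, Real.cos (θ s)) ≤ x := by
  intro x hx
  have := dl_sub hθ 0 ⟨le_rfl, (hx.1.trans hx.2)⟩ x hx hx.1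
  rw [intervalIntegral.integral_same, sub_zero, sub_zero] at this
  exact (abs_le.1 this).2

lemma dl_cont {t₁ : ℝ} {θ : ℝ → ℝ} (hθ : ∀ t ∈ Ioc (0:ℝ) t₁, ContinuousAt θ t) :
    ContinuousOn (fun x => ∫ s in (0:ℝ)..x, Real.cos (θ s)) (Icc (0:ℝ) t₁) := by
  apply LipschitzOnWith.continuousOn (K := 1)
  apply LipschitzOnWith.of_dist_le_mul
  intro x hx y hy
  rcases le_total y x with h | h
  · rw [Real.dist_eq, Real.dist_eq, abs_of_nonneg (sub_nonneg.2 h)]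
    simpa using dl_sub hθ y hy x hx h
  · rw [Real.dist_eq, Real.dist_eq, abs_of_nonpos (sub_nonpos.2 h), abs_sub_comm]
    simpa using dl_sub hθ x hx y hy h

lemma dl_deriv {t₁ : ℝ} {θ : ℝ → ℝ} (hθ : ∀ t ∈ Ioc (0:ℝ) t₁, ContinuousAt θ t) :
    ∀ t ∈ Ioo (0:ℝ) t₁, HasDerivAt (fun x => ∫ s in (0:ℝ)..x, Real.cos (θ s))
      (Real.cos (θ t)) t := by
  intro t ht
  refine intervalIntegral.integral_hasDerivAt_right (cos_int hθ t ⟨ht.1.le, ht.2.le⟩)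
    ⟨Ioo 0 t₁, Ioo_mem_nhds ht.1 ht.2, ContinuousOn.aestronglyMeasurable
      (fun u hu => (Real.continuous_cos.continuousAt.comp
        (hθ u ⟨hu.1, hu.2.le⟩)).continuousWithinAt) measurableSet_Ioo⟩ ?_
  exact Real.continuous_cos.continuousAt.comp (hθ t ⟨ht.1, ht.2.le⟩)

lemma barrier (t₁ M : ℝ) (θ c m : ℝ → ℝ) (ht₁ : 0 < t₁)
    (hode : ∀ t ∈ Ioc (0:ℝ) t₁, HasDerivAt θ (m t + Real.sin (θ t) * c t) t)
    (hδpos : ∀ t ∈ Ioc (0:ℝ) t₁, 0 < ∫ s in (0:ℝ)..t, Real.cos (θ s))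
    (hδc : ∀ t ∈ Ioc (0:ℝ) t₁, (∫ s in (0:ℝ)..t, Real.cos (θ s)) * c t < -3)
    (hM : ∀ t ∈ Ioc (0:ℝ) t₁, |m t| ≤ M)
    (hcos : ∀ t ∈ Ioc (0:ℝ) t₁, 0 ≤ Real.cos (θ t)) :
    Real.sin (θ t₁) ≤ M * t₁ / 3 := by
  set δ : ℝ → ℝ := fun x => ∫ s in (0:ℝ)..x, Real.cos (θ s) with hδdef
  have hθc : ∀ t ∈ Ioc (0:ℝ) t₁, ContinuousAt θ t := fun t ht => (hode t ht).continuousAt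
  have hδle := dl_le hθc
  have hδcont := dl_cont hθc
  have hδderiv := dl_deriv hθc
  have hM0 : 0 ≤ M := le_trans (abs_nonneg _) (hM t₁ ⟨ht₁, le_rfl⟩)
  set h : ℝ → ℝ := fun x => δ x ^ 3 * Real.sin (θ x) - M / 3 * δ x ^ 4 with hhdef
  -- derivative of h
  have hh : ∀ x ∈ Ioo (0:ℝ) t₁, HasDerivAt h
      ((3 * δ x ^ 2 * Real.cos (θ x)) * Real.sin (θ x)
        + δ x ^ 3 * (Real.cos (θ x) * (m x + Real.sin (θ x) * c x))
        - M / 3 * (4 * δ x ^ 3 * Real.cos (θ x))) x := by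
    intro x hx
    have hδ' := hδderiv x hx
    have hsin := (hode x ⟨hx.1, hx.2.le⟩).sin
    have h1 := ((hδ'.pow 3).mul hsin).sub ((hδ'.pow 4).const_mul (M / 3))
    convert h1 using 1
    · rfl
    · rfl
    · rfl
    simp only [hδdef, Pi.pow_apply]
    all_goals (push_cast; ring)
  -- continuity of h on Ioc 0 t₁
  have hhcont : ContinuousOn h (Ioc (0:ℝ) t₁) := by
    have hδc' : ContinuousOn δ (Ioc (0:ℝ) t₁) := hδcont.mono Ioc_subset_Icc_self
    have hsc : ContinuousOn (fun x => Real.sin (θ x)) (Ioc (0:ℝ) t₁) := fun x hx =>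
      (Real.continuous_sin.continuousAt.comp (hθc x hx)).continuousWithinAt
    exact ((hδc'.pow 3).mul hsc).sub (continuousOn_const.mul (hδc'.pow 4))
  -- main claim : h t₁ ≤ 0
  have hht₁ : h t₁ ≤ 0 := by
    by_contra hpos
    push_neg at hpos
    set b := h t₁ / 2 with hb
    have hbpos : 0 < b := by positivity
    set s₀ : ℝ := min t₁ (min 1 b) with hs₀
    have hs₀pos : 0 < s₀ := lt_min ht₁ (lt_min one_pos hbpos)
    have hs₀le : s₀ ≤ t₁ := min_le_left _ _
    have hs₀1 : s₀ ≤ 1 := (min_le_right _ _).trans (min_le_left _ _)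
    have hs₀b : s₀ ≤ b := (min_le_right _ _).trans (min_le_right _ _)
    have hs₀mem : s₀ ∈ Ioc (0:ℝ) t₁ := ⟨hs₀pos, hs₀le⟩
    -- h s₀ ≤ b
    have hhs₀ : h s₀ ≤ b := by
      have hd1 : 0 < δ s₀ := hδpos s₀ hs₀mem
      have hd2 : δ s₀ ≤ s₀ := hδle s₀ ⟨hs₀pos.le, hs₀le⟩
      have hsin1 : Real.sin (θ s₀) ≤ 1 := Real.sin_le_one _
      have hd3 : δ s₀ ^ 3 ≤ s₀ ^ 3 := by
        apply pow_le_pow_left₀ hd1.le hd2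
      have : h s₀ ≤ δ s₀ ^ 3 := by
        have h4 : 0 ≤ M / 3 * δ s₀ ^ 4 := by positivity
        have h5 : δ s₀ ^ 3 * Real.sin (θ s₀) ≤ δ s₀ ^ 3 * 1 :=
          mul_le_mul_of_nonneg_left hsin1 (by positivity)
        simp only [hhdef]
        nlinarith
      have : h s₀ ≤ s₀ ^ 3 := this.trans hd3
      have h6 : s₀ ^ 3 ≤ s₀ ^ 1 := pow_le_pow_of_le_one hs₀pos.le hs₀1 (by norm_num)
      rw [pow_one] at h6
      linarith
    -- the set S'
    set S : Set ℝ := Icc s₀ t₁ ∩ h ⁻¹' (Iic b) with hS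
    have hScl : IsClosed S := by
      apply (hhcont.mono (Icc_subset_Ioc_iff hs₀le |>.2 ⟨hs₀pos, le_rfl⟩) ).preimage_isClosed_of_isClosed isClosed_Icc isClosed_Iic
    have hSne : S.Nonempty := ⟨s₀, ⟨le_rfl, hs₀le⟩, hhs₀⟩
    have hSbdd : BddAbove S := ⟨t₁, fun x hx => hx.1.2⟩
    set s₁ := sSup S with hs₁
    have hs₁mem : s₁ ∈ S := hScl.csSup_mem hSne hSbdd
    have hs₁le : s₁ ≤ t₁ := hs₁mem.1.2
    have hs₁ge : s₀ ≤ s₁ := hs₁mem.1.1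
    have hs₁lt : s₁ < t₁ := by
      rcases eq_or_lt_of_le hs₁le with h' | h'
      · exfalso
        have h2 : h s₁ ≤ b := hs₁mem.2
        rw [h', hb] at h2
        clear_value δ h b s₀ S s₁
        linarith
      · exact h'
    -- h x > b for x in Ioc s₁ t₁
    have hgt : ∀ x ∈ Ioc s₁ t₁, b < h x := by
      intro x hx
      by_contra hle
      push_neg at hle
      have : x ∈ S := ⟨⟨hs₁ge.trans hx.1.le, hx.2⟩, hle⟩
      exact absurd (le_csSup hSbdd this) (not_le.2 hx.1)
    -- h antitone on [s₁, t₁]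
    have hanti : AntitoneOn h (Icc s₁ t₁) := by
      apply antitoneOn_of_deriv_nonpos (convex_Icc _ _)
      · exact hhcont.mono (fun x hx => ⟨hs₀pos.trans_le (hs₁ge.trans hx.1), hx.2⟩)
      · intro x hx
        rw [interior_Icc] at hx
        exact ((hh x ⟨hs₀pos.trans_le (hs₁ge.trans hx.1.le), hx.2⟩).differentiableAt).differentiableWithinAt
      · intro x hx
        rw [interior_Icc] at hx
        have hxm : x ∈ Ioo (0:ℝ) t₁ := ⟨hs₀pos.trans_le (hs₁ge.trans hx.1.le), hx.2⟩
        have hxm' : x ∈ Ioc (0:ℝ) t₁ := ⟨hxm.1, hxm.2.le⟩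
        rw [(hh x hxm).deriv]
        -- facts
        have hd : 0 < δ x := hδpos x hxm'
        have hdc : δ x * c x < -3 := hδc x hxm'
        have hmx : m x ≤ M := (le_abs_self _).trans (hM x hxm')
        have hcx : 0 ≤ Real.cos (θ x) := hcos x hxm'
        have hhx : b < h x := hgt x ⟨hx.1, hx.2.le⟩
        -- from h x > 0 : sin ≥ M δ /3
        have husin : M * δ x / 3 ≤ Real.sin (θ x) := by
          have : 0 < h x := hbpos.trans hhx
          simp only [hhdef] at this
          nlinarith [pow_pos hd 3]
        set u := Real.sin (θ x)
        set d := δ x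
        have key : u * (3 + d * c x) + d * (m x - 4 * M / 3) ≤ 0 := by
          have k1 : (u - M * d / 3) * (3 + d * c x) ≤ 0 :=
            mul_nonpos_of_nonneg_of_nonpos (by linarith) (by linarith)
          have k2 : (M * d / 3) * (d * c x + 3) ≤ 0 :=
            mul_nonpos_of_nonneg_of_nonpos (by positivity) (by linarith)
          have k3 : d * m x ≤ d * M := mul_le_mul_of_nonneg_left hmx hd.le
          nlinarith [mul_nonneg hM0 hd.le]
        calc (3 * d ^ 2 * Real.cos (θ x)) * u
              + d ^ 3 * (Real.cos (θ x) * (m x + u * c x))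
              - M / 3 * (4 * d ^ 3 * Real.cos (θ x))
            = Real.cos (θ x) * d ^ 2 * (u * (3 + d * c x) + d * (m x - 4 * M / 3)) := by ring
          _ ≤ 0 := mul_nonpos_of_nonneg_of_nonpos (by positivity) key
    have hfin : h t₁ ≤ h s₁ := hanti ⟨le_rfl, hs₁le⟩ ⟨hs₁le, le_rfl⟩ hs₁le
    have hs₁b : h s₁ ≤ b := hs₁mem.2
    rw [hb] at hs₁b
    clear_value δ h b s₀ S s₁
    linarith
  -- conclude
  have hd : 0 < δ t₁ := hδpos t₁ ⟨ht₁, le_rfl⟩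
  have hdle : δ t₁ ≤ t₁ := hδle t₁ ⟨ht₁.le, le_rfl⟩
  simp only [hhdef] at hht₁
  nlinarith [pow_pos hd 3, mul_nonneg hM0 (sub_nonneg.2 hdle), pow_nonneg hd.le 3]

lemma gstep (t₁ M : ℝ) (θ c m : ℝ → ℝ) (ht₁ : 0 < t₁)
    (hode : ∀ t ∈ Ioc (0:ℝ) t₁, HasDerivAt θ (m t + Real.sin (θ t) * c t) t)
    (hδpos : ∀ t ∈ Ioc (0:ℝ) t₁, 0 < ∫ s in (0:ℝ)..t, Real.cos (θ s))
    (hδc : ∀ t ∈ Ioc (0:ℝ) t₁, (∫ s in (0:ℝ)..t, Real.cos (θ s)) * c t < -3)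
    (hM : ∀ t ∈ Ioc (0:ℝ) t₁, |m t| ≤ M) :
    ∀ t ∈ Ioc (0:ℝ) t₁, t - M * t ^ 2 / 2 ≤
      (∫ s in (0:ℝ)..t, Real.cos (θ s)) * Real.cos (θ t) := by
  set δ : ℝ → ℝ := fun x => ∫ s in (0:ℝ)..x, Real.cos (θ s) with hδdef
  have hθc : ∀ t ∈ Ioc (0:ℝ) t₁, ContinuousAt θ t := fun t ht => (hode t ht).continuousAt
  have hδle := dl_le hθc
  have hδcont := dl_cont hθc
  have hδderiv := dl_deriv hθc
  have hM0 : 0 ≤ M := le_trans (abs_nonneg _) (hM t₁ ⟨ht₁, le_rfl⟩)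
  set G : ℝ → ℝ := fun x => δ x * Real.cos (θ x) - x + M / 2 * x ^ 2 with hGdef
  have hG : ∀ x ∈ Ioo (0:ℝ) t₁, HasDerivAt G
      (Real.cos (θ x) * Real.cos (θ x)
        + δ x * (-Real.sin (θ x) * (m x + Real.sin (θ x) * c x))
        - 1 + M / 2 * (2 * x)) x := by
    intro x hx
    have hδ' := hδderiv x hx
    have hcosd := (hode x ⟨hx.1, hx.2.le⟩).cos
    have h1 := (((hδ'.mul hcosd).sub (hasDerivAt_id x)).add ((hasDerivAt_pow 2 x).const_mul (M / 2)))
    convert h1 using 1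
    · rfl
    · rfl
    · rfl
    all_goals (push_cast; ring)
  have hGcont : ContinuousOn G (Ioc (0:ℝ) t₁) := by
    have hδc' : ContinuousOn δ (Ioc (0:ℝ) t₁) := hδcont.mono Ioc_subset_Icc_self
    have hcc : ContinuousOn (fun x => Real.cos (θ x)) (Ioc (0:ℝ) t₁) := fun x hx =>
      (Real.continuous_cos.continuousAt.comp (hθc x hx)).continuousWithinAt
    exact ((hδc'.mul hcc).sub (continuousOn_id)).add (continuousOn_const.mul (continuousOn_pow 2))
  have hG'nonneg : ∀ x ∈ Ioo (0:ℝ) t₁, 0 ≤ Real.cos (θ x) * Real.cos (θ x)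
        + δ x * (-Real.sin (θ x) * (m x + Real.sin (θ x) * c x))
        - 1 + M / 2 * (2 * x) := by
    intro x hx
    have hxm : x ∈ Ioc (0:ℝ) t₁ := ⟨hx.1, hx.2.le⟩
    have hd : 0 < δ x := hδpos x hxm
    have hdle : δ x ≤ x := hδle x ⟨hx.1.le, hx.2.le⟩
    have hdc : δ x * c x < -3 := hδc x hxm
    have hsc := Real.sin_sq_add_cos_sq (θ x)
    have habs : |Real.sin (θ x) * m x| ≤ M := by
      rw [abs_mul]
      calc |Real.sin (θ x)| * |m x| ≤ 1 * M :=
        mul_le_mul (Real.abs_sin_le_one _) (hM x hxm) (abs_nonneg _) one_pos.le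
      _ = M := one_mul M
    have h1 : Real.sin (θ x) * m x ≤ M := (le_abs_self _).trans habs
    have h2 : 0 ≤ (-(δ x * c x) - 3) * Real.sin (θ x) ^ 2 :=
      mul_nonneg (by linarith) (sq_nonneg _)
    have h3 : δ x * (Real.sin (θ x) * m x) ≤ δ x * M := mul_le_mul_of_nonneg_left h1 hd.le
    have h4 : δ x * M ≤ x * M := mul_le_mul_of_nonneg_right hdle hM0
    nlinarith [h2, h3, h4, hsc]
  -- now integrate: fix t
  intro t ht
  have key : ∀ s, 0 < s → s < t → δ t * Real.cos (θ t) ≥ t - M * t ^ 2 / 2 - 2 * s := by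
    intro s hs hst
    have hmono : MonotoneOn G (Icc s t) := by
      apply monotoneOn_of_deriv_nonneg (convex_Icc _ _)
      · exact hGcont.mono (fun x hx => ⟨hs.trans_le hx.1, hx.2.trans ht.2⟩)
      · intro x hx
        rw [interior_Icc] at hx
        exact ((hG x ⟨hs.trans hx.1, hx.2.trans_le ht.2⟩).differentiableAt).differentiableWithinAt
      · intro x hx
        rw [interior_Icc] at hx
        have hxm : x ∈ Ioo (0:ℝ) t₁ := ⟨hs.trans hx.1, hx.2.trans_le ht.2⟩
        rw [(hG x hxm).deriv]
        exact hG'nonneg x hxm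
    have hGst : G s ≤ G t := hmono ⟨le_rfl, hst.le⟩ ⟨hst.le, le_rfl⟩ hst.le
    have hds : 0 < δ s := hδpos s ⟨hs, hst.le.trans ht.2⟩
    have hdsle : δ s ≤ s := hδle s ⟨hs.le, hst.le.trans ht.2⟩
    have hcs : -1 ≤ Real.cos (θ s) := Real.neg_one_le_cos _
    have hcs2 : Real.cos (θ s) ≤ 1 := Real.cos_le_one _
    have hGs : δ s * Real.cos (θ s) - s + M / 2 * s ^ 2 ≥ -2 * s := by
      have h7 : δ s * Real.cos (θ s) ≥ -δ s := by nlinarith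
      have hMs : 0 ≤ M / 2 * s ^ 2 := by positivity
      nlinarith
    simp only [hGdef] at hGst
    clear_value δ G
    linarith
  by_contra hcon
  push_neg at hcon
  obtain ⟨ε, hε, hε'⟩ : ∃ ε, 0 < ε ∧ δ t * Real.cos (θ t) < t - M * t ^ 2 / 2 - 2 * ε := by
    refine ⟨(t - M * t ^ 2 / 2 - δ t * Real.cos (θ t)) / 4, by linarith, by linarith⟩
  have := key (min ε (t / 2)) (lt_min hε (by linarith [ht.1])) (min_lt_of_right_lt (by linarith [ht.1]))
  have hmin : min ε (t / 2) ≤ ε := min_le_left _ _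
  linarith

end Stmt7Aux

section
open MeasureTheory intervalIntegral Stmt7Aux

/-- two-sided barrier: assumes cos θ ≥ 0 on (0,t₁] -/
lemma barrier_abs (t₁ M : ℝ) (θ c m : ℝ → ℝ) (ht₁ : 0 < t₁)
    (hode : ∀ t ∈ Ioc (0:ℝ) t₁, HasDerivAt θ (m t + Real.sin (θ t) * c t) t)
    (hδpos : ∀ t ∈ Ioc (0:ℝ) t₁, 0 < ∫ s in (0:ℝ)..t, Real.cos (θ s))
    (hδc : ∀ t ∈ Ioc (0:ℝ) t₁, (∫ s in (0:ℝ)..t, Real.cos (θ s)) * c t < -3)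
    (hM : ∀ t ∈ Ioc (0:ℝ) t₁, |m t| ≤ M)
    (hcos : ∀ t ∈ Ioc (0:ℝ) t₁, 0 ≤ Real.cos (θ t)) :
    |Real.sin (θ t₁)| ≤ M * t₁ / 3 := by
  have hup := barrier t₁ M θ c m ht₁ hode hδpos hδc hM hcos
  have hdown : Real.sin (-θ t₁) ≤ M * t₁ / 3 := by
    have heq : ∀ x, Real.cos (-θ x) = Real.cos (θ x) := fun x => Real.cos_neg _
    refine barrier t₁ M (fun s => -θ s) c (fun s => -m s) ht₁ ?_ ?_ ?_ ?_ ?_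
    · intro t ht
      have h1 := (hode t ht).neg
      have h2 : -(m t + Real.sin (θ t) * c t) = -m t + Real.sin (-θ t) * c t := by
        rw [Real.sin_neg]; ring
      rw [h2] at h1
      exact h1
    · intro t ht; simpa only [heq] using hδpos t ht
    · intro t ht; simpa only [heq] using hδc t ht
    · intro t ht; rw [abs_neg]; exact hM t ht
    · intro t ht; rw [heq]; exact hcos t ht
  rw [Real.sin_neg] at hdown
  rw [abs_le]
  constructor <;> linarith


/-- Let `θ` be `C¹` on `(0,T]` satisfying `θ'(t) = m(t) + sin(θ(t))·c(t)` with `c`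
continuous and `m` bounded. If `δ(t) = ∫₀ᵗ cos(θ(s)) ds` satisfies `δ(t) > 0` and
`δ(t)·c(t) < -3` on `(0,T]`, then `|sin(θ(t))| ≤ t·M(t)/3` where
`M(t) = sup_{0 < s ≤ t} |m(s)|`. -/
theorem stmt_7 (T : ℝ) (hT : 0 < T) (θ c m : ℝ → ℝ)
    (hode : ∀ t ∈ Ioc (0 : ℝ) T, HasDerivAt θ (m t + Real.sin (θ t) * c t) t)
    (hc : ContinuousOn c (Ioc (0 : ℝ) T))
    (hderiv_cont : ContinuousOn (fun t => m t + Real.sin (θ t) * c t) (Ioc (0 : ℝ) T))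
    (hm_bdd : ∃ C : ℝ, ∀ t ∈ Ioc (0 : ℝ) T, |m t| ≤ C)
    (hδpos : ∀ t ∈ Ioc (0 : ℝ) T, 0 < ∫ s in (0:ℝ)..t, Real.cos (θ s))
    (hδc : ∀ t ∈ Ioc (0 : ℝ) T, (∫ s in (0:ℝ)..t, Real.cos (θ s)) * c t < -3) :
    ∀ t ∈ Ioc (0 : ℝ) T,
      |Real.sin (θ t)| ≤ t * sSup ((fun s => |m s|) '' Ioc (0 : ℝ) t) / 3 := by
  intro t₀ ht₀
  obtain ⟨C, hC⟩ := hm_bdd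
  set M := sSup ((fun s => |m s|) '' Ioc (0 : ℝ) t₀) with hMdef
  have hsub : Ioc (0:ℝ) t₀ ⊆ Ioc (0:ℝ) T := Ioc_subset_Ioc_right ht₀.2
  have hbdd : BddAbove ((fun s => |m s|) '' Ioc (0 : ℝ) t₀) := by
    refine ⟨C, ?_⟩
    rintro y ⟨s, hs, rfl⟩
    exact hC s (hsub hs)
  have hMb : ∀ s ∈ Ioc (0:ℝ) t₀, |m s| ≤ M := fun s hs => le_csSup hbdd ⟨s, hs, rfl⟩
  have hM0 : 0 ≤ M := le_trans (abs_nonneg _) (hMb t₀ ⟨ht₀.1, le_rfl⟩)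
  have habs1 : |Real.sin (θ t₀)| ≤ 1 := Real.abs_sin_le_one _
  by_cases hbig : 3 ≤ t₀ * M
  · calc |Real.sin (θ t₀)| ≤ 1 := habs1
      _ ≤ t₀ * M / 3 := by linarith
  push_neg at hbig
  -- restricted hypotheses
  have hode' : ∀ t ∈ Ioc (0:ℝ) t₀, HasDerivAt θ (m t + Real.sin (θ t) * c t) t :=
    fun t ht => hode t (hsub ht)
  have hδpos' : ∀ t ∈ Ioc (0:ℝ) t₀, 0 < ∫ s in (0:ℝ)..t, Real.cos (θ s) :=
    fun t ht => hδpos t (hsub ht)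
  have hδc' : ∀ t ∈ Ioc (0:ℝ) t₀, (∫ s in (0:ℝ)..t, Real.cos (θ s)) * c t < -3 :=
    fun t ht => hδc t (hsub ht)
  have hθc : ∀ t ∈ Ioc (0:ℝ) t₀, ContinuousAt θ t := fun t ht => (hode' t ht).continuousAt
  have hδle := dl_le hθc
  have hG := gstep t₀ M θ c m ht₀.1 hode' hδpos' hδc' hMb
  -- cos θ > 0 for small t
  set ε₀ : ℝ := min t₀ (1 / (M + 1)) with hε₀def
  have hε₀pos : 0 < ε₀ := lt_min ht₀.1 (by positivity)
  have hε₀le : ε₀ ≤ t₀ := min_le_left _ _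
  have hcos_small : ∀ s ∈ Ioc (0:ℝ) ε₀, 0 < Real.cos (θ s) := by
    intro s hs
    have hsm : s ∈ Ioc (0:ℝ) t₀ := ⟨hs.1, hs.2.trans hε₀le⟩
    have h1 := hG s hsm
    have hMs : M * s ≤ 1 := by
      have h2 : s ≤ 1 / (M + 1) := hs.2.trans (min_le_right _ _)
      have h3 : M + 1 > 0 := by positivity
      rw [le_div_iff₀ h3] at h2
      nlinarith [hs.1]
    have h4 : 0 < s - M * s ^ 2 / 2 := by nlinarith [hs.1]
    have hd : 0 < ∫ u in (0:ℝ)..s, Real.cos (θ u) := hδpos' s hsm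
    nlinarith [h1, hd, mul_pos hd (lt_of_lt_of_le h4 (h1))]
  -- cos θ ≥ 0 on all of (0, t₁] for t₁ < t₀
  have hcos_nonneg : ∀ t₁ ∈ Ioc (0:ℝ) t₀, (∀ s ∈ Ioc (0:ℝ) t₁, 0 ≤ Real.cos (θ s)) := by
    intro t₁ ht₁
    by_contra hcon
    push_neg at hcon
    obtain ⟨s₂, hs₂mem, hs₂⟩ := hcon
    have hs₂ε : ε₀ < s₂ := by
      by_contra hle
      push_neg at hle
      exact absurd (hcos_small s₂ ⟨hs₂mem.1, hle⟩) (not_lt.2 hs₂.le)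
    set Z : Set ℝ := Icc ε₀ t₁ ∩ (fun s => Real.cos (θ s)) ⁻¹' (Iic 0) with hZdef
    have hccont : ContinuousOn (fun s => Real.cos (θ s)) (Icc ε₀ t₁) := fun x hx =>
      (Real.continuous_cos.continuousAt.comp
        (hθc x ⟨hε₀pos.trans_le hx.1, hx.2.trans ht₁.2⟩)).continuousWithinAt
    have hZcl : IsClosed Z := hccont.preimage_isClosed_of_isClosed isClosed_Icc isClosed_Iic
    have hZne : Z.Nonempty := ⟨s₂, ⟨hs₂ε.le, hs₂mem.2⟩, hs₂.le⟩
    have hZbdd : BddBelow Z := ⟨ε₀, fun x hx => hx.1.1⟩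
    set t₂ := sInf Z with ht₂def
    have ht₂mem : t₂ ∈ Z := hZcl.csInf_mem hZne hZbdd
    have ht₂ε : ε₀ ≤ t₂ := ht₂mem.1.1
    have ht₂t₁ : t₂ ≤ t₁ := ht₂mem.1.2
    have ht₂pos : 0 < t₂ := hε₀pos.trans_le ht₂ε
    have ht₂cos : Real.cos (θ t₂) ≤ 0 := ht₂mem.2
    -- cos θ > 0 on (0, t₂)
    have hlt : ∀ s ∈ Ioo (0:ℝ) t₂, 0 < Real.cos (θ s) := by
      intro s hs
      rcases le_or_gt s ε₀ with h | h
      · exact hcos_small s ⟨hs.1, h⟩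
      · by_contra hle
        push_neg at hle
        have : s ∈ Z := ⟨⟨h.le, hs.2.le.trans ht₂t₁⟩, hle⟩
        exact absurd (csInf_le hZbdd this) (not_le.2 hs.2)
    -- cos θ t₂ ≥ 0 by left limit
    have hge : 0 ≤ Real.cos (θ t₂) := by
      have hcont : ContinuousAt (fun s => Real.cos (θ s)) t₂ :=
        Real.continuous_cos.continuousAt.comp (hθc t₂ ⟨ht₂pos, ht₂t₁.trans ht₁.2⟩)
      have htend : Tendsto (fun s => Real.cos (θ s)) (𝓝[<] t₂) (𝓝 (Real.cos (θ t₂))) :=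
        hcont.continuousWithinAt.tendsto
      refine ge_of_tendsto htend ?_
      filter_upwards [Ioo_mem_nhdsLT ht₂pos] with s hs
      exact (hlt s hs).le
    have ht₂cos0 : Real.cos (θ t₂) = 0 := le_antisymm ht₂cos hge
    have hsin1 : Real.sin (θ t₂) ^ 2 = 1 := by
      have := Real.sin_sq_add_cos_sq (θ t₂)
      rw [ht₂cos0] at this
      nlinarith
    -- apply barrier at t₂
    have hbar := barrier_abs t₂ M θ c m ht₂pos
      (fun t ht => hode' t ⟨ht.1, ht.2.trans (ht₂t₁.trans ht₁.2)⟩)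
      (fun t ht => hδpos' t ⟨ht.1, ht.2.trans (ht₂t₁.trans ht₁.2)⟩)
      (fun t ht => hδc' t ⟨ht.1, ht.2.trans (ht₂t₁.trans ht₁.2)⟩)
      (fun t ht => hMb t ⟨ht.1, ht.2.trans (ht₂t₁.trans ht₁.2)⟩)
      (fun t ht => by
        rcases eq_or_lt_of_le ht.2 with h | h
        · rw [h]; exact hge
        · exact (hlt t ⟨ht.1, h⟩).le)
    have habs2 : |Real.sin (θ t₂)| ≤ M * t₂ / 3 := hbar
    have ht₂t₀ : t₂ ≤ t₀ := ht₂t₁.trans ht₁.2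
    have : M * t₂ / 3 < 1 := by nlinarith [mul_le_mul_of_nonneg_left ht₂t₀ hM0]
    nlinarith [abs_nonneg (Real.sin (θ t₂)), sq_abs (Real.sin (θ t₂))]
  -- apply barrier at every t₁ in (0, t₀)
  have hclaim : ∀ t₁ ∈ Ioc (0:ℝ) t₀, |Real.sin (θ t₁)| ≤ M * t₁ / 3 := by
    intro t₁ ht₁
    exact barrier_abs t₁ M θ c m ht₁.1
      (fun t ht => hode' t ⟨ht.1, ht.2.trans ht₁.2⟩)
      (fun t ht => hδpos' t ⟨ht.1, ht.2.trans ht₁.2⟩)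
      (fun t ht => hδc' t ⟨ht.1, ht.2.trans ht₁.2⟩)
      (fun t ht => hMb t ⟨ht.1, ht.2.trans ht₁.2⟩)
      (hcos_nonneg t₁ ht₁)
  have := hclaim t₀ ⟨ht₀.1, le_rfl⟩
  linarith

end
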